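/- Let u, v be associative Lyndon-Shirshov words with u = avb. Define the relative bracketing [u]_v from [u] = [a[vc]d] by replacing [vc] with [[[v][c₁]]⋯[c_k]], where c = c₁⋯c_k is the non-decreasing Lyndon factorization of c. Then, viewed in k⟨X⟩, the leading word of [u]_v is u, and [u]_v = a[v]b + Σᵢ αᵢ aᵢ[v]bᵢ where each aᵢ v bᵢ < a v b = u in the deg-lex order. -/

import Mathlib

open List

/-- The lexicographic order used by Shirshov: a word is *greater* than any of its
proper extensions (`w > w ++ t` for `t ≠ []`), and otherwise words are compared
letterwise by the order on the alphabet.  `LSLt u v` means `u < v`. -/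
def LSLt {X : Type*} [LinearOrder X] : List X → List X → Prop
  | _ :: _, [] => True
  | [], _ => False
  | a :: u, b :: v => a < b ∨ (a = b ∧ LSLt u v)

/-- `u ≤ v` in the Shirshov lexicographic order. -/
def LSLe {X : Type*} [LinearOrder X] (u v : List X) : Prop := u = v ∨ LSLt u v

/-- The degree-lexicographic order: compare first by length, then lexicographically. -/
def DegLt {X : Type*} [LinearOrder X] (u v : List X) : Prop :=
  u.length < v.length ∨ (u.length = v.length ∧ LSLt u v)

/-- `≤` in the degree-lexicographic order. -/
def DegLe {X : Type*} [LinearOrder X] (u v : List X) : Prop := u = v ∨ DegLt u v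

/-- An associative Lyndon–Shirshov word: a nonempty word `u` such that `vw > wv`
(lexicographically) for every factorization `u = vw` into nonempty parts. -/
def IsALSW {X : Type*} [LinearOrder X] (u : List X) : Prop :=
  u ≠ [] ∧ ∀ v w : List X, v ≠ [] → w ≠ [] → u = v ++ w → LSLt (w ++ v) (v ++ w)

/-- The underlying associative word of a non-associative word (binary bracketing). -/
def wordOf {X : Type*} : FreeMagma X → List X
  | .of x => [x]
  | .mul a b => wordOf a ++ wordOf b

/-- `w` is the longest proper suffix of `u` which is an ALSW. -/
def LongestALSWProperSuffix {X : Type*} [LinearOrder X] (u w : List X) : Prop :=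
  IsALSW w ∧ (∃ v : List X, v ≠ [] ∧ u = v ++ w) ∧
    ∀ w' : List X, IsALSW w' → (∃ v' : List X, v' ≠ [] ∧ u = v' ++ w') →
      w'.length ≤ w.length

/-- The standard (up-to-down) bracketing of an ALSW: `[x] = x` and
`[u] = [[v][w]]` where `w` is the longest proper ALSW suffix of `u`. -/
inductive IsStdBracketing {X : Type*} [LinearOrder X] : List X → FreeMagma X → Prop
  | of (x : X) : IsStdBracketing [x] (.of x)
  | mul {v w : List X} {tv tw : FreeMagma X} :
      IsALSW (v ++ w) → LongestALSWProperSuffix (v ++ w) w →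
      IsStdBracketing v tv → IsStdBracketing w tw →
      IsStdBracketing (v ++ w) (tv * tw)

/-- A non-associative Lyndon–Shirshov word, via Shirshov's conditions:
the underlying word is an ALSW, both halves are NLSWs, and the right factor of
the left half is `≤` the right half. -/
inductive IsNLSW {X : Type*} [LinearOrder X] : FreeMagma X → Prop
  | of (x : X) : IsNLSW (.of x)
  | mul {tv tw : FreeMagma X} :
      IsNLSW tv → IsNLSW tw → IsALSW (wordOf (tv * tw)) →
      (∀ t₁ t₂ : FreeMagma X, tv = t₁ * t₂ → LSLe (wordOf t₂) (wordOf tw)) →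
      IsNLSW (tv * tw)

/-- The free associative algebra `k⟨X⟩`, realized as the monoid algebra of the
free monoid on `X`. -/
abbrev FreeAssocAlg (k X : Type*) [Field k] := MonoidAlgebra k (FreeMonoid X)

/-- The monomial of `k⟨X⟩` corresponding to a word `u ∈ X*`. -/
noncomputable def monom (k : Type*) [Field k] {X : Type*} (u : List X) : FreeAssocAlg k X :=
  MonoidAlgebra.single (FreeMonoid.ofList u) 1

/-- The coefficient of the word `u` in `f ∈ k⟨X⟩`. -/
def coeffW {k X : Type*} [Field k] (f : FreeAssocAlg k X) (u : List X) : k :=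
  f.coeff (FreeMonoid.ofList u)

/-- `u` is the leading word of `f` with respect to the deg-lex order. -/
def IsLeadingWord {k X : Type*} [Field k] [LinearOrder X]
    (f : FreeAssocAlg k X) (u : List X) : Prop :=
  coeffW f u ≠ 0 ∧ ∀ w : List X, coeffW f w ≠ 0 → w = u ∨ DegLt w u

/-- `f` is monic: its leading coefficient is `1`. -/
def IsMonic {k X : Type*} [Field k] [LinearOrder X] (f : FreeAssocAlg k X) : Prop :=
  ∃ u : List X, IsLeadingWord f u ∧ coeffW f u = 1

/-- The generator `x ∈ X` inside `k⟨X⟩`. -/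
noncomputable def gen (k : Type*) [Field k] {X : Type*} (x : X) : FreeAssocAlg k X :=
  monom k [x]

attribute [local instance 100] LieRing.ofAssociativeRing

/-- The free Lie algebra `Lie(X)`: the Lie subalgebra of `k⟨X⟩` generated by `X`
under the commutator bracket. -/
noncomputable def LieX (k X : Type*) [Field k] : LieSubalgebra k (FreeAssocAlg k X) :=
  LieSubalgebra.lieSpan k _ (Set.range (gen k (X := X)))

/-- Evaluation of a non-associative word in `k⟨X⟩`, interpreting the binary
operation as the commutator `(ab) = ab - ba`. -/
noncomputable def evalC {k X : Type*} [Field k] : FreeMagma X → FreeAssocAlg k X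
  | .of x => gen k x
  | .mul a b => evalC a * evalC b - evalC b * evalC a

/-- `SubtreeAt s a d t`: `s` occurs as a (bracketed) subtree of `t`, with the word
`a` to its left and the word `d` to its right. -/
inductive SubtreeAt {X : Type*} : FreeMagma X → List X → List X → FreeMagma X → Prop
  | refl (t : FreeMagma X) : SubtreeAt t [] [] t
  | left {s : FreeMagma X} {a d : List X} {t₁ : FreeMagma X} (t₂ : FreeMagma X) :
      SubtreeAt s a d t₁ → SubtreeAt s a (d ++ wordOf t₂) (t₁ * t₂)
  | right {s : FreeMagma X} {a d : List X} {t₂ : FreeMagma X} (t₁ : FreeMagma X) :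
      SubtreeAt s a d t₂ → SubtreeAt s (wordOf t₁ ++ a) d (t₁ * t₂)

/-- `ReplaceAt s s' a d t t'`: `t'` is obtained from `t` by replacing the subtree
`s`, occurring at position `(a, d)`, by `s'`. -/
inductive ReplaceAt {X : Type*} (s s' : FreeMagma X) :
    List X → List X → FreeMagma X → FreeMagma X → Prop
  | refl : ReplaceAt s s' [] [] s s'
  | left {a d : List X} {t₁ t₁' : FreeMagma X} (t₂ : FreeMagma X) :
      ReplaceAt s s' a d t₁ t₁' → ReplaceAt s s' a (d ++ wordOf t₂) (t₁ * t₂) (t₁' * t₂)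
  | right {a d : List X} {t₂ t₂' : FreeMagma X} (t₁ : FreeMagma X) :
      ReplaceAt s s' a d t₂ t₂' →
      ReplaceAt s s' (wordOf t₁ ++ a) d (t₁ * t₂) (t₁ * t₂')

/-- The left-normed product `[[[t₀ t₁] t₂] ⋯ tₙ]`. -/
def leftComb {X : Type*} (t₀ : FreeMagma X) (ts : List (FreeMagma X)) : FreeMagma X :=
  ts.foldl (· * ·) t₀

/-- `cs` is the non-decreasing Lyndon factorization of `c`. -/
def LyndonFactorization {X : Type*} [LinearOrder X] (c : List X) (cs : List (List X)) : Prop :=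
  c = cs.flatten ∧ (∀ w ∈ cs, IsALSW w) ∧ cs.Chain' LSLe

/-- `EvalSub k f s a d t h`: evaluating the bracketing `t` in `k⟨X⟩` (via
commutators), except that its subtree `s` at position `(a, d)` is replaced by the
polynomial `f`, gives the value `h`. -/
inductive EvalSub (k : Type*) [Field k] {X : Type*} [LinearOrder X] (f : FreeAssocAlg k X) :
    FreeMagma X → List X → List X → FreeMagma X → FreeAssocAlg k X → Prop
  | refl (s : FreeMagma X) : EvalSub k f s [] [] s f
  | left {s : FreeMagma X} {a d : List X} {t₁ : FreeMagma X} {h : FreeAssocAlg k X}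
      (t₂ : FreeMagma X) : EvalSub k f s a d t₁ h →
      EvalSub k f s a (d ++ wordOf t₂) (t₁ * t₂) (h * evalC t₂ - evalC t₂ * h)
  | right {s : FreeMagma X} {a d : List X} {t₂ : FreeMagma X} {h : FreeAssocAlg k X}
      (t₁ : FreeMagma X) : EvalSub k f s a d t₂ h →
      EvalSub k f s (wordOf t₁ ++ a) d (t₁ * t₂) (evalC t₁ * h - h * evalC t₁)

/-- `IsNormalSWord f fbar a b h`: `h` is the normal `S`-word `[afb]_{f̄}`, i.e. the
result of taking the relative (Shirshov special) bracketing `[a f̄ b]_{f̄}` and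
substituting the polynomial `f` for the subtree `[f̄]`. -/
def IsNormalSWord {k X : Type*} [Field k] [LinearOrder X]
    (f : FreeAssocAlg k X) (fbar a b : List X) (h : FreeAssocAlg k X) : Prop :=
  ∃ (c d : List X) (t s tv t' : FreeMagma X) (cs : List (List X)) (tcs : List (FreeMagma X)),
    b = c ++ d ∧
    IsStdBracketing (a ++ fbar ++ b) t ∧
    SubtreeAt s a d t ∧ wordOf s = fbar ++ c ∧
    IsStdBracketing fbar tv ∧
    LyndonFactorization c cs ∧
    List.Forall₂ IsStdBracketing cs tcs ∧
    ReplaceAt s (leftComb tv tcs) a d t t' ∧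
    EvalSub k f tv a (c ++ d) t' h

section OrderLemmas

variable {X : Type*} [LinearOrder X]

@[simp] theorem lslt_nil_left {v : List X} : ¬ LSLt [] v := by cases v <;> simp [LSLt]

@[simp] theorem lslt_cons_nil {a : X} {u : List X} : LSLt (a :: u) [] := by simp [LSLt]

@[simp] theorem lslt_cons_cons {a b : X} {u v : List X} :
    LSLt (a :: u) (b :: v) ↔ a < b ∨ (a = b ∧ LSLt u v) := by simp [LSLt]

theorem lslt_trans : ∀ {u v w : List X}, LSLt u v → LSLt v w → LSLt u w
  | _ :: _, _ :: _, [], _, _ => lslt_cons_nil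
  | [], _, _, h, _ => absurd h lslt_nil_left
  | _ :: _, [], _, _, h => absurd h lslt_nil_left
  | a :: u, b :: v, c :: w, h1, h2 => by
    rw [lslt_cons_cons] at *
    rcases h1 with h1 | ⟨rfl, h1⟩
    · rcases h2 with h2 | ⟨rfl, h2⟩
      · exact Or.inl (h1.trans h2)
      · exact Or.inl h1
    · rcases h2 with h2 | ⟨rfl, h2⟩
      · exact Or.inl h2
      · exact Or.inr ⟨rfl, lslt_trans h1 h2⟩

theorem lslt_irrefl : ∀ {u : List X}, ¬ LSLt u u
  | [] => lslt_nil_left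
  | _ :: _ => by
    rw [lslt_cons_cons]
    rintro (h | ⟨-, h⟩)
    · exact absurd h (lt_irrefl _)
    · exact lslt_irrefl h

theorem lslt_asymm {u v : List X} (h : LSLt u v) : ¬ LSLt v u :=
  fun h' => lslt_irrefl (lslt_trans h h')

theorem lslt_total : ∀ {u v : List X}, u.length = v.length → u ≠ v → LSLt u v ∨ LSLt v u
  | [], [], _, h => absurd rfl h
  | a :: u, b :: v, hl, h => by
    rcases lt_trichotomy a b with hab | rfl | hab
    · exact Or.inl (lslt_cons_cons.2 (Or.inl hab))
    · have : u ≠ v := fun huv => h (by rw [huv])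
      rcases lslt_total (by simpa using hl) this with h' | h'
      · exact Or.inl (lslt_cons_cons.2 (Or.inr ⟨rfl, h'⟩))
      · exact Or.inr (lslt_cons_cons.2 (Or.inr ⟨rfl, h'⟩))
    · exact Or.inr (lslt_cons_cons.2 (Or.inl hab))

theorem lslt_append_left_iff : ∀ (w : List X) {u v : List X},
    LSLt (w ++ u) (w ++ v) ↔ LSLt u v
  | [], u, v => Iff.rfl
  | a :: w, u, v => by
    simp only [List.cons_append, lslt_cons_cons, lt_irrefl, false_or, true_and,
      lslt_append_left_iff w]

theorem lslt_append_left {w u v : List X} (h : LSLt u v) : LSLt (w ++ u) (w ++ v) :=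
  (lslt_append_left_iff w).2 h

/-- Either `x` is a proper extension of `y`, or the inequality is witnessed by a
letter difference and is stable under arbitrary right extensions. -/
theorem lslt_cases : ∀ {x y : List X}, LSLt x y →
    (∃ t, t ≠ [] ∧ x = y ++ t) ∨ (∀ s t, LSLt (x ++ s) (y ++ t))
  | a :: u, [], _ => Or.inl ⟨a :: u, by simp, rfl⟩
  | [], _, h => absurd h lslt_nil_left
  | a :: u, b :: v, h => by
    rcases lslt_cons_cons.1 h with hab | ⟨rfl, h2⟩
    · exact Or.inr fun s t => lslt_cons_cons.2 (Or.inl hab)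
    · rcases lslt_cases h2 with ⟨t, ht, rfl⟩ | h'
      · exact Or.inl ⟨t, ht, by simp⟩
      · exact Or.inr fun s t => lslt_cons_cons.2 (Or.inr ⟨rfl, h' s t⟩)

theorem lslt_append_any {x y : List X} (hl : x.length = y.length) (h : LSLt x y)
    (s t : List X) : LSLt (x ++ s) (y ++ t) := by
  rcases lslt_cases h with ⟨r, hr, rfl⟩ | h'
  · exfalso
    have := congrArg List.length (rfl : y ++ r = y ++ r)
    simp only [List.length_append] at hl
    have : r.length = 0 := by omega
    exact hr (List.length_eq_zero_iff.1 this)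
  · exact h' s t

theorem lslt_append_right {x y w : List X} (hl : x.length = y.length) (h : LSLt x y) :
    LSLt (x ++ w) (y ++ w) := lslt_append_any hl h w w

theorem lsle_refl {u : List X} : LSLe u u := Or.inl rfl

theorem lsle_trans {u v w : List X} (h1 : LSLe u v) (h2 : LSLe v w) : LSLe u w := by
  rcases h1 with rfl | h1
  · exact h2
  rcases h2 with rfl | h2
  · exact Or.inr h1
  · exact Or.inr (lslt_trans h1 h2)

theorem lslt_of_lsle_of_lslt {u v w : List X} (h1 : LSLe u v) (h2 : LSLt v w) : LSLt u w := by
  rcases h1 with rfl | h1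
  · exact h2
  · exact lslt_trans h1 h2

theorem lslt_of_lslt_of_lsle {u v w : List X} (h1 : LSLt u v) (h2 : LSLe v w) : LSLt u w := by
  rcases h2 with rfl | h2
  · exact h1
  · exact lslt_trans h1 h2

instance : IsTrans (List X) LSLe := ⟨fun _ _ _ => lsle_trans⟩

theorem lsle_append {u v s t : List X} (hl : u.length = v.length)
    (h1 : LSLe u v) (h2 : LSLe s t) : LSLe (u ++ s) (v ++ t) := by
  rcases h1 with rfl | h1
  · rcases h2 with rfl | h2
    · exact lsle_refl
    · exact Or.inr (lslt_append_left h2)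
  · exact Or.inr (lslt_append_any hl h1 s t)

end OrderLemmas
set_option linter.unusedSectionVars false

section CyclicLemmas

variable {X : Type*} [LinearOrder X]

/-- `n`-fold repetition of a word. -/
def rep (x : List X) : ℕ → List X
  | 0 => []
  | n + 1 => x ++ rep x n

theorem rep_succ {x : List X} {n : ℕ} : rep x (n + 1) = x ++ rep x n := rfl

@[simp] theorem rep_one {x : List X} : rep x 1 = x := by simp [rep]

@[simp] theorem rep_length {x : List X} : ∀ n, (rep x n).length = n * x.length
  | 0 => by simp [rep]
  | n + 1 => by simp [rep_succ, rep_length n, Nat.succ_mul, Nat.add_comm]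

theorem rep_ne_nil {x : List X} (hx : x ≠ []) {n : ℕ} (hn : 0 < n) : rep x n ≠ [] := by
  cases n with
  | zero => omega
  | succ n => simp [rep_succ, hx]

/-- Strict cyclic comparison. -/
def Clt (x y : List X) : Prop := LSLt (x ++ y) (y ++ x)

/-- Cyclic equivalence. -/
def Ceq (x y : List X) : Prop := x ++ y = y ++ x

/-- Non-strict cyclic comparison. -/
def Cle (x y : List X) : Prop := Ceq x y ∨ Clt x y

theorem ceq_refl {x : List X} : Ceq x x := rfl

theorem cle_refl {x : List X} : Cle x x := Or.inl ceq_refl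

theorem clt_asymm {x y : List X} (h : Clt x y) : ¬ Clt y x := lslt_asymm h

theorem clt_irrefl {x : List X} : ¬ Clt x x := lslt_irrefl

theorem clt_total {x y : List X} : Clt x y ∨ Ceq x y ∨ Clt y x := by
  by_cases h : x ++ y = y ++ x
  · exact Or.inr (Or.inl h)
  · rcases lslt_total (by simp [Nat.add_comm]) h with h' | h'
    · exact Or.inl h'
    · exact Or.inr (Or.inr h')

theorem clt_rep_right {x y : List X} (h : Clt x y) : ∀ {n : ℕ}, 0 < n → Clt x (rep y n)
  | 1, _ => by simpa using h
  | n + 2, _ => by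
    have ih : Clt x (rep y (n + 1)) := clt_rep_right h (Nat.succ_pos n)
    show LSLt (x ++ (y ++ rep y (n + 1))) ((y ++ rep y (n + 1)) ++ x)
    have s1 : LSLt ((x ++ y) ++ rep y (n + 1)) ((y ++ x) ++ rep y (n + 1)) :=
      lslt_append_right (by simp [Nat.add_comm]) h
    have s2 : LSLt (y ++ (x ++ rep y (n + 1))) (y ++ (rep y (n + 1) ++ x)) :=
      lslt_append_left ih
    exact lslt_trans
      (show LSLt (x ++ (y ++ rep y (n + 1))) (y ++ (x ++ rep y (n + 1))) by
        simpa [List.append_assoc] using s1)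
      (show LSLt (y ++ (x ++ rep y (n + 1))) ((y ++ rep y (n + 1)) ++ x) by
        simpa [List.append_assoc] using s2)

theorem clt_rep_left {x y : List X} (h : Clt x y) : ∀ {n : ℕ}, 0 < n → Clt (rep x n) y
  | 1, _ => by simpa using h
  | n + 2, _ => by
    have ih : Clt (rep x (n + 1)) y := clt_rep_left h (Nat.succ_pos n)
    show LSLt ((x ++ rep x (n + 1)) ++ y) (y ++ (x ++ rep x (n + 1)))
    have s1 : LSLt (x ++ (rep x (n + 1) ++ y)) (x ++ (y ++ rep x (n + 1))) :=
      lslt_append_left ih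
    have s2 : LSLt ((x ++ y) ++ rep x (n + 1)) ((y ++ x) ++ rep x (n + 1)) :=
      lslt_append_right (by simp [Nat.add_comm]) h
    exact lslt_trans
      (show LSLt ((x ++ rep x (n + 1)) ++ y) (x ++ (y ++ rep x (n + 1))) by
        simpa [List.append_assoc] using s1)
      (show LSLt (x ++ (y ++ rep x (n + 1))) (y ++ (x ++ rep x (n + 1))) by
        simpa [List.append_assoc] using s2)

theorem ceq_append_rep_left {x y : List X} (h : Ceq x y) : ∀ n, rep x n ++ y = y ++ rep x n
  | 0 => by simp [rep]
  | n + 1 => by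
    have ih := ceq_append_rep_left h n
    have h' : x ++ y = y ++ x := h
    show (x ++ rep x n) ++ y = y ++ (x ++ rep x n)
    rw [List.append_assoc, ih, ← List.append_assoc, h', List.append_assoc]

theorem ceq_rep {x y : List X} (h : Ceq x y) : ∀ {m n : ℕ}, Ceq (rep x m) (rep y n) := by
  intro m n
  induction n with
  | zero => show rep x m ++ rep y 0 = rep y 0 ++ rep x m; simp [rep]
  | succ n ih =>
    have ih' : rep x m ++ rep y n = rep y n ++ rep x m := ih
    show rep x m ++ (y ++ rep y n) = (y ++ rep y n) ++ rep x m
    rw [← List.append_assoc, ceq_append_rep_left h m, List.append_assoc, ih',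
      ← List.append_assoc]

theorem clt_rep {x y : List X} (h : Clt x y) {m n : ℕ} (hm : 0 < m) (hn : 0 < n) :
    Clt (rep x m) (rep y n) := clt_rep_right (clt_rep_left h hm) hn

theorem clt_iff_lslt {x y : List X} (hx : x ≠ []) (hy : y ≠ []) (hl : x.length = y.length) :
    Clt x y ↔ LSLt x y := by
  constructor
  · intro h
    by_contra h'
    rcases eq_or_ne x y with rfl | hne
    · exact clt_irrefl h
    · rcases lslt_total hl hne with h'' | h''
      · exact h' h''
      · exact lslt_asymm h (lslt_append_any hl.symm h'' x y)
  · intro h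
    exact lslt_append_any hl h y x

theorem ceq_iff_eq {x y : List X} (hl : x.length = y.length) : Ceq x y ↔ x = y := by
  constructor
  · intro h
    exact (List.append_inj h hl).1
  · rintro rfl; rfl

section Trans

variable {x y z : List X} (hx : x ≠ []) (hy : y ≠ []) (hz : z ≠ [])

include hx hy hz

theorem cle_rep_big (h1 : Cle x y) :
    LSLe (rep x (y.length * z.length)) (rep y (x.length * z.length)) := by
  have px : 0 < x.length := List.length_pos_iff.2 hx
  have py : 0 < y.length := List.length_pos_iff.2 hy
  have pz : 0 < z.length := List.length_pos_iff.2 hz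
  have lab : (rep x (y.length * z.length)).length = (rep y (x.length * z.length)).length := by
    simp only [rep_length]; ring
  rcases h1 with h1 | h1
  · exact Or.inl ((ceq_iff_eq lab).1 (ceq_rep h1))
  · exact Or.inr ((clt_iff_lslt (rep_ne_nil hx (by positivity)) (rep_ne_nil hy (by positivity))
      lab).1 (clt_rep h1 (by positivity) (by positivity)))

theorem clt_of_big (hAC : LSLt (rep x (y.length * z.length)) (rep z (x.length * y.length))) :
    Clt x z := by
  have px : 0 < x.length := List.length_pos_iff.2 hx
  have py : 0 < y.length := List.length_pos_iff.2 hy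
  have pz : 0 < z.length := List.length_pos_iff.2 hz
  have lac : (rep x (y.length * z.length)).length = (rep z (x.length * y.length)).length := by
    simp only [rep_length]; ring
  rcases clt_total (x := x) (y := z) with h | h | h
  · exact h
  · exfalso
    have : rep x (y.length * z.length) = rep z (x.length * y.length) := (ceq_iff_eq lac).1 (ceq_rep h)
    rw [this] at hAC
    exact lslt_irrefl hAC
  · exfalso
    have : Clt (rep z (x.length * y.length)) (rep x (y.length * z.length)) :=
      clt_rep h (by positivity) (by positivity)
    exact lslt_asymm hAC ((clt_iff_lslt (rep_ne_nil hz (by positivity))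
      (rep_ne_nil hx (by positivity)) lac.symm).1 this)

theorem clt_trans_cle_left (h1 : Cle x y) (h2 : Clt y z) : Clt x z := by
  have px : 0 < x.length := List.length_pos_iff.2 hx
  have py : 0 < y.length := List.length_pos_iff.2 hy
  have pz : 0 < z.length := List.length_pos_iff.2 hz
  have hBC : LSLt (rep y (x.length * z.length)) (rep z (x.length * y.length)) :=
    (clt_iff_lslt (rep_ne_nil hy (by positivity)) (rep_ne_nil hz (by positivity))
      (by simp only [rep_length]; ring)).1 (clt_rep h2 (by positivity) (by positivity))
  exact clt_of_big hx hy hz (lslt_of_lsle_of_lslt (cle_rep_big hx hy hz h1) hBC)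

theorem cle_trans (h1 : Cle x y) (h2 : Cle y z) : Cle x z := by
  rcases h2 with h2 | h2
  · have px : 0 < x.length := List.length_pos_iff.2 hx
    have py : 0 < y.length := List.length_pos_iff.2 hy
    have pz : 0 < z.length := List.length_pos_iff.2 hz
    have hBC : rep y (x.length * z.length) = rep z (x.length * y.length) :=
      (ceq_iff_eq (by simp only [rep_length]; ring)).1 (ceq_rep h2)
    have hAC : LSLe (rep x (y.length * z.length)) (rep z (x.length * y.length)) := by
      rw [← hBC]; exact cle_rep_big hx hy hz h1
    rcases hAC with hAC | hAC
    · rcases clt_total (x := x) (y := z) with h | h | h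
      · exact Or.inr h
      · exact Or.inl h
      · exfalso
        have : Clt (rep z (x.length * y.length)) (rep x (y.length * z.length)) :=
          clt_rep h (by positivity) (by positivity)
        rw [← hAC] at this
        exact clt_irrefl this
    · exact Or.inr (clt_of_big hx hy hz hAC)
  · exact Or.inr (clt_trans_cle_left hx hy hz h1 h2)

end Trans

theorem cle_cancel_left {x t : List X} (h : Cle x t) : Cle x (x ++ t) := by
  rcases h with h | h
  · left
    show x ++ (x ++ t) = (x ++ t) ++ x
    have h' : x ++ t = t ++ x := h
    rw [List.append_assoc, ← h']
  · right
    show LSLt (x ++ (x ++ t)) ((x ++ t) ++ x)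
    rw [List.append_assoc]
    exact lslt_append_left h

end CyclicLemmas
section ALSWLemmas

variable {X : Type*} [LinearOrder X]

theorem alsw_ne_nil {u : List X} (h : IsALSW u) : u ≠ [] := h.1

theorem alsw_swap {v w : List X} (h : IsALSW (v ++ w)) (hv : v ≠ []) (hw : w ≠ []) :
    LSLt (w ++ v) (v ++ w) := h.2 v w hv hw rfl

theorem cle_of_alsw_lsle {x y : List X} (hx : IsALSW x) (hy : IsALSW y) (h : LSLe x y) :
    Cle x y := by
  rcases h with rfl | h
  · exact cle_refl
  rcases lslt_cases h with ⟨t, ht, rfl⟩ | h'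
  · right
    show LSLt ((y ++ t) ++ y) (y ++ (y ++ t))
    have swap : LSLt (t ++ y) (y ++ t) := alsw_swap hx hy.1 ht
    have := lslt_append_left (w := y) swap
    rw [List.append_assoc]
    exact this
  · exact Or.inr (h' y x)

theorem cle_head_join : ∀ (l : List (List X)) (x : List X), IsALSW x →
    (∀ w ∈ l, IsALSW w) → List.Chain' LSLe (x :: l) → Cle x ((x :: l).flatten)
  | [], x, _, _, _ => by simpa using cle_refl
  | y :: l, x, hx, hall, hch => by
    have hy : IsALSW y := hall y (by simp)
    have hxy : LSLe x y := List.isChain_cons_cons.1 hch |>.1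
    have ih : Cle y ((y :: l).flatten) := cle_head_join l y hy (fun w hw => hall w (by simp [hw]))
      (List.isChain_cons_cons.1 hch).2
    have hjoin_ne : ((y :: l).flatten) ≠ [] := by
      simp only [List.flatten_cons]
      intro hcon
      exact hy.1 (List.append_eq_nil_iff.1 hcon).1
    have hxj : Cle x ((y :: l).flatten) :=
      cle_trans hx.1 hy.1 hjoin_ne (cle_of_alsw_lsle hx hy hxy) ih
    show Cle x (x ++ (y :: l).flatten)
    exact cle_cancel_left hxj

/-- The key inequality: each Lyndon factor of `c`, cyclically shifted to the front of
the corresponding prefix of `vc`, gives a lexicographically smaller word. -/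
theorem key_ineq {v : List X} {cs : List (List X)} (hvc : IsALSW (v ++ cs.flatten))
    (hv : v ≠ []) (hall : ∀ w ∈ cs, IsALSW w) (hch : List.Chain' LSLe cs)
    {l₁ l₂ : List (List X)} {x : List X} (hsplit : cs = l₁ ++ x :: l₂) :
    LSLt (x ++ (v ++ l₁.flatten)) ((v ++ l₁.flatten) ++ x) := by
  have hxA : IsALSW x := hall x (by simp [hsplit])
  set P : List X := v ++ l₁.flatten with hP
  set S : List X := (x :: l₂).flatten with hS
  have hPne : P ≠ [] := by
    intro hcon
    exact hv (List.append_eq_nil_iff.1 hcon).1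
  have hSne : S ≠ [] := by
    simp only [hS, List.flatten_cons]
    intro hcon
    exact hxA.1 (List.append_eq_nil_iff.1 hcon).1
  have hdecomp : v ++ cs.flatten = P ++ S := by
    simp [hP, hS, hsplit, List.flatten_append, List.append_assoc]
  have hSP : LSLt (S ++ P) (P ++ S) := by
    rw [hdecomp] at hvc
    exact alsw_swap hvc hPne hSne
  have hchx : List.Chain' LSLe (x :: l₂) := by
    refine hch.sublist ?_
    rw [hsplit]
    exact (List.sublist_append_right l₁ (x :: l₂))
  have hxS : Cle x S :=
    cle_head_join l₂ x hxA (fun w hw => hall w (by simp [hsplit, hw])) hchx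
  exact clt_trans_cle_left hxA.1 hSne hPne hxS hSP

end ALSWLemmas

section MagmaLemmas

variable {X : Type*} [LinearOrder X]

theorem wordOf_mul {t₁ t₂ : FreeMagma X} : wordOf (t₁ * t₂) = wordOf t₁ ++ wordOf t₂ := rfl

theorem wordOf_ne_nil : ∀ t : FreeMagma X, wordOf t ≠ []
  | .of x => by simp [wordOf]
  | .mul a b => by
    simp only [wordOf]
    intro h
    exact wordOf_ne_nil a (List.append_eq_nil_iff.1 h).1

theorem std_word {u : List X} {t : FreeMagma X} (h : IsStdBracketing u t) : wordOf t = u := by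
  induction h with
  | of x => rfl
  | mul _ _ _ _ ih1 ih2 => rw [wordOf_mul, ih1, ih2]

theorem std_alsw {u : List X} {t : FreeMagma X} (h : IsStdBracketing u t) : IsALSW u := by
  induction h with
  | of x =>
    refine ⟨by simp, fun v w hv hw he => ?_⟩
    exfalso
    have := congrArg List.length he
    simp only [List.length_append, List.length_cons, List.length_nil] at this
    have hv' : 0 < v.length := List.length_pos_iff.2 hv
    have hw' : 0 < w.length := List.length_pos_iff.2 hw
    omega
  | mul ha _ _ _ _ _ => exact ha

theorem std_mul_inv {u : List X} {t₁ t₂ : FreeMagma X} (h : IsStdBracketing u (t₁ * t₂)) :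
    IsStdBracketing (wordOf t₁) t₁ ∧ IsStdBracketing (wordOf t₂) t₂ ∧
      u = wordOf t₁ ++ wordOf t₂ := by
  cases h with
  | mul ha hl h1 h2 => exact ⟨by rwa [std_word h1], by rwa [std_word h2],
      by rw [std_word h1, std_word h2]⟩

theorem subtree_std {s : FreeMagma X} : ∀ {a d : List X} {t : FreeMagma X},
    SubtreeAt s a d t → IsStdBracketing (wordOf t) t → IsStdBracketing (wordOf s) s := by
  intro a d t hsub
  induction hsub with
  | refl => exact id
  | left t₂ _ ih => exact fun h => ih (std_mul_inv h).1
  | right t₁ _ ih => exact fun h => ih (std_mul_inv h).2.1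

theorem replace_word {s s' : FreeMagma X} : ∀ {a d : List X} {t t' : FreeMagma X},
    ReplaceAt s s' a d t t' →
      wordOf t = a ++ wordOf s ++ d ∧ wordOf t' = a ++ wordOf s' ++ d := by
  intro a d t t' hrep
  induction hrep with
  | refl => simp
  | left t₂ _ ih =>
    rw [wordOf_mul, wordOf_mul, ih.1, ih.2]
    simp [List.append_assoc]
  | right t₁ _ ih =>
    rw [wordOf_mul, wordOf_mul, ih.1, ih.2]
    simp [List.append_assoc]

end MagmaLemmas
section CoeffLemmas

variable {k X : Type*} [Field k] [LinearOrder X]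

theorem coeffW_add (f g : FreeAssocAlg k X) (w : List X) :
    coeffW (f + g) w = coeffW f w + coeffW g w := rfl

theorem coeffW_zero (w : List X) : coeffW (0 : FreeAssocAlg k X) w = 0 := rfl

theorem coeffW_neg (f : FreeAssocAlg k X) (w : List X) : coeffW (-f) w = - coeffW f w := rfl

theorem coeffW_sub (f g : FreeAssocAlg k X) (w : List X) :
    coeffW (f - g) w = coeffW f w - coeffW g w := by
  show (f - g).coeff (FreeMonoid.ofList w) = _
  rw [MonoidAlgebra.coeff_sub, Finsupp.sub_apply]
  rfl

theorem coeffW_smul (α : k) (f : FreeAssocAlg k X) (w : List X) :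
    coeffW (α • f) w = α * coeffW f w := rfl

theorem coeffW_monom (u w : List X) :
    coeffW (monom k u) w = if w = u then 1 else 0 := by
  by_cases h : w = u
  · subst h
    show (MonoidAlgebra.single (FreeMonoid.ofList w) (1 : k)).coeff (FreeMonoid.ofList w) = _
    rw [MonoidAlgebra.coeff_single, Finsupp.single_eq_same, if_pos rfl]
  · show (MonoidAlgebra.single (FreeMonoid.ofList u) (1 : k)).coeff (FreeMonoid.ofList w) = _
    rw [MonoidAlgebra.coeff_single, Finsupp.single_eq_of_ne' (fun hc => h (FreeMonoid.ofList.injective hc).symm), if_neg h]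

theorem coeffW_monom_self (u : List X) : coeffW (monom k u) u = 1 := by
  rw [coeffW_monom, if_pos rfl]

theorem monom_mul (a b : List X) : monom k a * monom k b = monom k (a ++ b) := by
  show MonoidAlgebra.single _ _ * MonoidAlgebra.single _ _ = _
  rw [MonoidAlgebra.single_mul_single, ← FreeMonoid.ofList_append]
  simp [monom]

theorem monom_nil : monom k ([] : List X) = 1 := by
  show MonoidAlgebra.single _ _ = _
  rw [MonoidAlgebra.one_def]
  rfl

theorem mul_words {f g : FreeAssocAlg k X} {w : List X} (h : coeffW (f * g) w ≠ 0) :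
    ∃ w₁ w₂, w = w₁ ++ w₂ ∧ coeffW f w₁ ≠ 0 ∧ coeffW g w₂ ≠ 0 := by
  classical
  have hw : FreeMonoid.ofList w ∈ (f * g).coeff.support := Finsupp.mem_support_iff.2 h
  have hsub := MonoidAlgebra.support_coeff_mul_subset f g hw
  rw [Finset.mem_mul] at hsub
  obtain ⟨y, hy, z, hz, hyz⟩ := hsub
  refine ⟨FreeMonoid.toList y, FreeMonoid.toList z, ?_, ?_, ?_⟩
  · have : w = FreeMonoid.toList (y * z) := by
      rw [hyz]; simp
    rw [this, FreeMonoid.toList_mul]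
  · show f.coeff (FreeMonoid.ofList (FreeMonoid.toList y)) ≠ 0
    simpa using Finsupp.mem_support_iff.1 hy
  · show g.coeff (FreeMonoid.ofList (FreeMonoid.toList z)) ≠ 0
    simpa using Finsupp.mem_support_iff.1 hz

/-- `f` is weakly bounded by `u`: every word of `f` has the length of `u` and is `≤ u`. -/
def WBnd (f : FreeAssocAlg k X) (u : List X) : Prop :=
  ∀ w, coeffW f w ≠ 0 → w.length = u.length ∧ LSLe w u

/-- `f` is strictly bounded by `u`. -/
def SBnd (f : FreeAssocAlg k X) (u : List X) : Prop :=
  ∀ w, coeffW f w ≠ 0 → w.length = u.length ∧ LSLt w u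

theorem sb_wb {f : FreeAssocAlg k X} {u : List X} (h : SBnd f u) : WBnd f u :=
  fun w hw => ⟨(h w hw).1, Or.inr (h w hw).2⟩

theorem wb_monom (u : List X) : WBnd (monom k u) u := by
  intro w hw
  rw [coeffW_monom] at hw
  by_cases h : w = u
  · subst h; exact ⟨rfl, lsle_refl⟩
  · simp [h] at hw

theorem sb_zero (u : List X) : SBnd (0 : FreeAssocAlg k X) u := by
  intro w hw; exact absurd (coeffW_zero w) hw

theorem sb_add {f g : FreeAssocAlg k X} {u : List X} (hf : SBnd f u) (hg : SBnd g u) :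
    SBnd (f + g) u := by
  intro w hw
  rw [coeffW_add] at hw
  by_cases h : coeffW f w = 0
  · exact hg w (by intro h'; rw [h, h'] at hw; simp at hw)
  · exact hf w h

theorem wb_add {f g : FreeAssocAlg k X} {u : List X} (hf : WBnd f u) (hg : WBnd g u) :
    WBnd (f + g) u := by
  intro w hw
  rw [coeffW_add] at hw
  by_cases h : coeffW f w = 0
  · exact hg w (by intro h'; rw [h, h'] at hw; simp at hw)
  · exact hf w h

theorem sb_neg {f : FreeAssocAlg k X} {u : List X} (hf : SBnd f u) : SBnd (-f) u := by
  intro w hw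
  rw [coeffW_neg, neg_ne_zero] at hw
  exact hf w hw

theorem sb_sub {f g : FreeAssocAlg k X} {u : List X} (hf : SBnd f u) (hg : SBnd g u) :
    SBnd (f - g) u := by
  rw [sub_eq_add_neg]; exact sb_add hf (sb_neg hg)

theorem sb_smul {f : FreeAssocAlg k X} {u : List X} (α : k) (hf : SBnd f u) :
    SBnd (α • f) u := by
  intro w hw
  rw [coeffW_smul] at hw
  exact hf w (right_ne_zero_of_mul hw)

theorem wb_mul {f g : FreeAssocAlg k X} {p q : List X} (hf : WBnd f p) (hg : WBnd g q) :
    WBnd (f * g) (p ++ q) := by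
  intro w hw
  obtain ⟨w₁, w₂, rfl, h1, h2⟩ := mul_words hw
  obtain ⟨l1, b1⟩ := hf w₁ h1
  obtain ⟨l2, b2⟩ := hg w₂ h2
  exact ⟨by simp [l1, l2], lsle_append l1 b1 b2⟩

theorem sb_mul_left {f g : FreeAssocAlg k X} {p q : List X} (hf : SBnd f p) (hg : WBnd g q) :
    SBnd (f * g) (p ++ q) := by
  intro w hw
  obtain ⟨w₁, w₂, rfl, h1, h2⟩ := mul_words hw
  obtain ⟨l1, b1⟩ := hf w₁ h1
  obtain ⟨l2, b2⟩ := hg w₂ h2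
  exact ⟨by simp [l1, l2], lslt_append_any l1 b1 w₂ q⟩

theorem sb_mul_right {f g : FreeAssocAlg k X} {p q : List X} (hf : WBnd f p) (hg : SBnd g q) :
    SBnd (f * g) (p ++ q) := by
  intro w hw
  obtain ⟨w₁, w₂, rfl, h1, h2⟩ := mul_words hw
  obtain ⟨l1, b1⟩ := hf w₁ h1
  obtain ⟨l2, b2⟩ := hg w₂ h2
  refine ⟨by simp [l1, l2], ?_⟩
  rcases b1 with rfl | b1
  · exact lslt_append_left b2
  · exact lslt_append_any l1 b1 w₂ q

theorem sb_of_wb_lt {f : FreeAssocAlg k X} {r u : List X} (hf : WBnd f r)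
    (hlt : LSLt r u) (hl : r.length = u.length) : SBnd f u := by
  intro w hw
  obtain ⟨l1, b1⟩ := hf w hw
  exact ⟨by rw [l1, hl], lslt_of_lsle_of_lslt b1 hlt⟩

theorem sb_of_sb_le {f : FreeAssocAlg k X} {r u : List X} (hf : SBnd f r)
    (hle : LSLe r u) (hl : r.length = u.length) : SBnd f u := by
  intro w hw
  obtain ⟨l1, b1⟩ := hf w hw
  exact ⟨by rw [l1, hl], lslt_of_lslt_of_lsle b1 hle⟩

theorem evalC_mul (t₁ t₂ : FreeMagma X) :
    evalC (k := k) (t₁ * t₂) = evalC t₁ * evalC t₂ - evalC t₂ * evalC t₁ := rfl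

/-- **Shirshov's leading-term theorem**: for a standard bracketing `t` of an ALSW `u`,
`[u] = u + (strictly smaller words)`. -/
theorem std_decomp {u : List X} {t : FreeMagma X} (h : IsStdBracketing u t) :
    SBnd (evalC (k := k) t - monom k u) u := by
  induction h with
  | of x =>
    have : evalC (k := k) (FreeMagma.of x) = monom k [x] := rfl
    rw [this, sub_self]
    exact sb_zero _
  | mul ha hsuf h1 h2 ih1 ih2 =>
    rename_i v w tv tw
    have hv : IsALSW v := std_alsw h1
    have hw : IsALSW w := std_alsw h2
    set M := monom k v
    set N := monom k w
    set A := evalC (k := k) tv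
    set B := evalC (k := k) tw
    have key : A * B - B * A - monom k (v ++ w) =
        M * (B - N) + (A - M) * N + (A - M) * (B - N) + -(B * A) := by
      rw [← monom_mul]
      noncomm_ring
    rw [evalC_mul, key]
    have sb1 : SBnd (M * (B - N)) (v ++ w) := sb_mul_right (wb_monom v) ih2
    have sb2 : SBnd ((A - M) * N) (v ++ w) := sb_mul_left ih1 (wb_monom w)
    have sb3 : SBnd ((A - M) * (B - N)) (v ++ w) := sb_mul_left ih1 (sb_wb ih2)
    have wbA : WBnd A v := by
      have : A = M + (A - M) := by abel
      rw [this]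
      exact wb_add (wb_monom v) (sb_wb ih1)
    have wbB : WBnd B w := by
      have : B = N + (B - N) := by abel
      rw [this]
      exact wb_add (wb_monom w) (sb_wb ih2)
    have sb4 : SBnd (B * A) (v ++ w) :=
      sb_of_wb_lt (wb_mul wbB wbA) (alsw_swap ha hv.1 hw.1) (by simp [Nat.add_comm])
    exact sb_add (sb_add (sb_add sb1 sb2) sb3) (sb_neg sb4)

theorem wb_evalC {u : List X} {t : FreeMagma X} (h : IsStdBracketing u t) :
    WBnd (evalC (k := k) t) u := by
  have : evalC (k := k) t = monom k u + (evalC (k := k) t - monom k u) := by abel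
  rw [this]
  exact wb_add (wb_monom u) (sb_wb (std_decomp h))

theorem sbnd_coeff_self {f : FreeAssocAlg k X} {u : List X} (h : SBnd f u) :
    coeffW f u = 0 := by
  by_contra h'
  exact lslt_irrefl (h u h').2

end CoeffLemmas
section GoodSumLemmas

variable {k X : Type*} [Field k] [LinearOrder X]

/-- One term `α • a'[tv]b'` of a structured sum. -/
noncomputable def gsEntry (tv : FreeMagma X) (p : k × List X × List X) : FreeAssocAlg k X :=
  p.1 • (monom k p.2.1 * evalC tv * monom k p.2.2)

/-- `g` is a sum of terms `αᵢ • aᵢ[tv]bᵢ` with `aᵢ v bᵢ` strictly deg-lex below `U`. -/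
def GoodSum (tv : FreeMagma X) (v U : List X) (g : FreeAssocAlg k X) : Prop :=
  ∃ l : List (k × List X × List X), g = (l.map (gsEntry tv)).sum ∧
    ∀ p ∈ l, (p.2.1 ++ v ++ p.2.2).length = U.length ∧ LSLt (p.2.1 ++ v ++ p.2.2) U

variable {tv : FreeMagma X} {v U : List X}

theorem gs_zero : GoodSum tv v U (0 : FreeAssocAlg k X) := ⟨[], by simp, by simp⟩

theorem gs_single (α : k) (a' b' : List X) (hl : (a' ++ v ++ b').length = U.length)
    (hlt : LSLt (a' ++ v ++ b') U) :
    GoodSum tv v U (α • (monom k a' * evalC tv * monom k b')) :=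
  ⟨[(α, a', b')], by simp [gsEntry], fun p hp => by
    rw [List.mem_singleton] at hp; subst hp; exact ⟨hl, hlt⟩⟩

theorem gs_add {g₁ g₂ : FreeAssocAlg k X} (h₁ : GoodSum tv v U g₁) (h₂ : GoodSum tv v U g₂) :
    GoodSum tv v U (g₁ + g₂) := by
  obtain ⟨l₁, rfl, hb₁⟩ := h₁
  obtain ⟨l₂, rfl, hb₂⟩ := h₂
  refine ⟨l₁ ++ l₂, by simp, fun p hp => ?_⟩
  rcases List.mem_append.1 hp with hp | hp
  · exact hb₁ p hp
  · exact hb₂ p hp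

theorem gs_neg {g : FreeAssocAlg k X} (h : GoodSum tv v U g) : GoodSum tv v U (-g) := by
  obtain ⟨l, rfl, hb⟩ := h
  refine ⟨l.map fun p => (-p.1, p.2), ?_, fun p hp => ?_⟩
  · rw [List.map_map]
    induction l with
    | nil => simp
    | cons q l ih =>
      simp only [List.map_cons, List.sum_cons, neg_add, ih (fun p hp => hb p (by simp [hp]))]
      congr 1
      simp [gsEntry, Function.comp]
  · obtain ⟨q, hq, rfl⟩ := List.mem_map.1 hp
    exact hb q hq

theorem gs_sub {g₁ g₂ : FreeAssocAlg k X} (h₁ : GoodSum tv v U g₁) (h₂ : GoodSum tv v U g₂) :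
    GoodSum tv v U (g₁ - g₂) := by
  rw [sub_eq_add_neg]; exact gs_add h₁ (gs_neg h₂)

theorem gs_smul {g : FreeAssocAlg k X} (α : k) (h : GoodSum tv v U g) :
    GoodSum tv v U (α • g) := by
  obtain ⟨l, rfl, hb⟩ := h
  refine ⟨l.map fun p => (α * p.1, p.2), ?_, fun p hp => ?_⟩
  · rw [List.map_map, List.smul_sum, List.map_map]
    congr 1
    apply List.map_congr_left
    intro p _
    simp [gsEntry, Function.comp, smul_smul]
  · obtain ⟨q, hq, rfl⟩ := List.mem_map.1 hp
    exact hb q hq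

theorem gs_bound_mono {g : FreeAssocAlg k X} {U' : List X} (h : GoodSum tv v U g)
    (hl : U.length = U'.length) (hlt : LSLt U U') : GoodSum tv v U' g := by
  obtain ⟨l, rfl, hb⟩ := h
  exact ⟨l, rfl, fun p hp => ⟨(hb p hp).1.trans hl, lslt_trans (hb p hp).2 hlt⟩⟩

theorem gs_mul_monom_any {g : FreeAssocAlg k X} (h : GoodSum tv v U g) {e q : List X}
    (hl : e.length = q.length) : GoodSum tv v (U ++ q) (g * monom k e) := by
  obtain ⟨l, rfl, hb⟩ := h
  refine ⟨l.map fun p => (p.1, p.2.1, p.2.2 ++ e), ?_, fun p hp => ?_⟩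
  · rw [List.map_map]
    induction l with
    | nil => simp
    | cons p l ih =>
      simp only [List.map_cons, List.sum_cons, add_mul,
        ih (fun p hp => hb p (by simp [hp]))]
      congr 1
      simp [gsEntry, Function.comp, smul_mul_assoc, mul_assoc, monom_mul]
  · obtain ⟨q', hq, rfl⟩ := List.mem_map.1 hp
    obtain ⟨hql, hqlt⟩ := hb q' hq
    constructor
    · simp only [List.length_append] at *
      omega
    · have := lslt_append_any hql hqlt e q
      simpa [List.append_assoc] using this

theorem gs_monom_mul_le {g : FreeAssocAlg k X} (h : GoodSum tv v U g) {e q : List X}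
    (hle : LSLe e q) (hl : e.length = q.length) :
    GoodSum tv v (q ++ U) (monom k e * g) := by
  obtain ⟨l, rfl, hb⟩ := h
  refine ⟨l.map fun p => (p.1, e ++ p.2.1, p.2.2), ?_, fun p hp => ?_⟩
  · rw [List.map_map]
    induction l with
    | nil => simp
    | cons p l ih =>
      simp only [List.map_cons, List.sum_cons, mul_add,
        ih (fun p hp => hb p (by simp [hp]))]
      congr 1
      simp [gsEntry, Function.comp, mul_smul_comm]
      rw [← mul_assoc, ← mul_assoc, monom_mul]
  · obtain ⟨q', hq, rfl⟩ := List.mem_map.1 hp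
    obtain ⟨hql, hqlt⟩ := hb q' hq
    constructor
    · simp only [List.length_append] at *
      omega
    · show LSLt (e ++ q'.2.1 ++ v ++ q'.2.2) (q ++ U)
      have h1 : LSLt (e ++ (q'.2.1 ++ v ++ q'.2.2)) (q ++ U) := by
        rcases hle with rfl | hlt
        · exact lslt_append_left hqlt
        · exact lslt_append_any hl hlt _ _
      simpa [List.append_assoc] using h1

theorem single_eq_smul_monom (m : FreeMonoid X) (c : k) :
    (MonoidAlgebra.single m c : FreeAssocAlg k X) = c • monom k (FreeMonoid.toList m) := by
  rw [monom]
  simp only [FreeMonoid.ofList_toList]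
  rw [MonoidAlgebra.smul_single', mul_one]

theorem wbnd_single_add {m : FreeMonoid X} {c : k} {f : FreeAssocAlg k X} {q : List X}
    (hm : m ∉ f.coeff.support) (hc : c ≠ 0) (hw : WBnd (MonoidAlgebra.single m c + f) q) :
    ((FreeMonoid.toList m).length = q.length ∧ LSLe (FreeMonoid.toList m) q) ∧ WBnd f q := by
  have hfm : f.coeff m = 0 := Finsupp.notMem_support_iff.1 hm
  constructor
  · refine hw (FreeMonoid.toList m) ?_
    show (MonoidAlgebra.single m c + f).coeff (FreeMonoid.ofList (FreeMonoid.toList m)) ≠ 0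
    rw [FreeMonoid.ofList_toList, MonoidAlgebra.coeff_add, Finsupp.add_apply, MonoidAlgebra.coeff_single, Finsupp.single_eq_same, hfm, add_zero]
    exact hc
  · intro w hwne
    by_cases he : FreeMonoid.ofList w = m
    · exfalso
      apply hwne
      show f.coeff (FreeMonoid.ofList w) = 0
      rw [he]; exact hfm
    · refine hw w ?_
      show (MonoidAlgebra.single m c + f).coeff (FreeMonoid.ofList w) ≠ 0
      rw [MonoidAlgebra.coeff_add, Finsupp.add_apply, MonoidAlgebra.coeff_single, Finsupp.single_eq_of_ne' (fun h => he h.symm), zero_add]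
      exact hwne

theorem sbnd_single_add {m : FreeMonoid X} {c : k} {f : FreeAssocAlg k X} {q : List X}
    (hm : m ∉ f.coeff.support) (hc : c ≠ 0) (hw : SBnd (MonoidAlgebra.single m c + f) q) :
    ((FreeMonoid.toList m).length = q.length ∧ LSLt (FreeMonoid.toList m) q) ∧ SBnd f q := by
  have hfm : f.coeff m = 0 := Finsupp.notMem_support_iff.1 hm
  constructor
  · refine hw (FreeMonoid.toList m) ?_
    show (MonoidAlgebra.single m c + f).coeff (FreeMonoid.ofList (FreeMonoid.toList m)) ≠ 0
    rw [FreeMonoid.ofList_toList, MonoidAlgebra.coeff_add, Finsupp.add_apply, MonoidAlgebra.coeff_single, Finsupp.single_eq_same, hfm, add_zero]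
    exact hc
  · intro w hwne
    by_cases he : FreeMonoid.ofList w = m
    · exfalso
      apply hwne
      show f.coeff (FreeMonoid.ofList w) = 0
      rw [he]; exact hfm
    · refine hw w ?_
      show (MonoidAlgebra.single m c + f).coeff (FreeMonoid.ofList w) ≠ 0
      rw [MonoidAlgebra.coeff_add, Finsupp.add_apply, MonoidAlgebra.coeff_single, Finsupp.single_eq_of_ne' (fun h => he h.symm), zero_add]
      exact hwne

theorem gs_mul_wb {g : FreeAssocAlg k X} (hg : GoodSum tv v U g) {h : FreeAssocAlg k X}
    {q : List X} (hh : WBnd h q) : GoodSum tv v (U ++ q) (g * h) := by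
  revert hh
  induction h using MonoidAlgebra.induction with
  | zero => intro _; rw [mul_zero]; exact gs_zero
  | single_add m c f hm hc ih =>
    intro hh
    obtain ⟨⟨hlm, _⟩, hf⟩ := wbnd_single_add hm hc hh
    rw [mul_add]
    refine gs_add ?_ (ih hf)
    rw [single_eq_smul_monom, mul_smul_comm]
    exact gs_smul c (gs_mul_monom_any hg hlm)

theorem gs_wb_mul {g : FreeAssocAlg k X} (hg : GoodSum tv v U g) {h : FreeAssocAlg k X}
    {q : List X} (hh : WBnd h q) : GoodSum tv v (q ++ U) (h * g) := by
  revert hh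
  induction h using MonoidAlgebra.induction with
  | zero => intro _; rw [zero_mul]; exact gs_zero
  | single_add m c f hm hc ih =>
    intro hh
    obtain ⟨⟨hlm, hle⟩, hf⟩ := wbnd_single_add hm hc hh
    rw [add_mul]
    refine gs_add ?_ (ih hf)
    rw [single_eq_smul_monom, smul_mul_assoc]
    exact gs_smul c (gs_monom_mul_le hg hle hlm)

/-- `a[tv] ⬝ h` with `h` strictly bounded by `q` is a good sum below `a ++ v ++ q`. -/
theorem gs_headTerm_mul_sb {h : FreeAssocAlg k X} {q a : List X} (hh : SBnd h q) :
    GoodSum tv v (a ++ (v ++ q)) ((monom k a * evalC tv) * h) := by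
  revert hh
  induction h using MonoidAlgebra.induction with
  | zero => intro _; rw [mul_zero]; exact gs_zero
  | single_add m c f hm hc ih =>
    intro hh
    obtain ⟨⟨hlm, hlt⟩, hf⟩ := sbnd_single_add hm hc hh
    rw [mul_add]
    refine gs_add ?_ (ih hf)
    rw [single_eq_smul_monom, mul_smul_comm]
    refine gs_smul c ?_
    have hlt2 : LSLt (a ++ v ++ FreeMonoid.toList m) (a ++ (v ++ q)) := by
      have := lslt_append_left (w := a ++ v) hlt
      simpa [List.append_assoc] using this
    have hgs := gs_single (tv := tv) (v := v) (U := a ++ (v ++ q)) (1 : k) a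
      (FreeMonoid.toList m) (by simp only [List.length_append]; omega) hlt2
    rwa [one_smul] at hgs

/-- `a[tv] ⬝ h` with `h` weakly bounded by `q`, with overall strict bound `U`. -/
theorem gs_headTerm_wb_lt {h : FreeAssocAlg k X} {q a : List X} (hh : WBnd h q)
    (hlt : LSLt (a ++ (v ++ q)) U) (hlen : (a ++ (v ++ q)).length = U.length) :
    GoodSum tv v U ((monom k a * evalC tv) * h) := by
  revert hh
  induction h using MonoidAlgebra.induction with
  | zero => intro _; rw [mul_zero]; exact gs_zero
  | single_add m c f hm hc ih =>
    intro hh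
    obtain ⟨⟨hlm, hle⟩, hf⟩ := wbnd_single_add hm hc hh
    rw [mul_add]
    refine gs_add ?_ (ih hf)
    rw [single_eq_smul_monom, mul_smul_comm]
    refine gs_smul c ?_
    have hwl : (a ++ v ++ FreeMonoid.toList m).length = U.length := by
      simp only [List.length_append] at *
      omega
    have hwlt : LSLt (a ++ v ++ FreeMonoid.toList m) U := by
      rcases hle with rfl | hle'
      · simpa [List.append_assoc] using hlt
      · refine lslt_trans ?_ (show LSLt (a ++ v ++ q) U by simpa [List.append_assoc] using hlt)
        exact lslt_append_left (w := a ++ v) hle'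
    have hgs := gs_single (tv := tv) (v := v) (U := U) (1 : k) a (FreeMonoid.toList m) hwl hwlt
    rwa [one_smul] at hgs

/-- `h ⬝ a[tv]b` with `h` weakly bounded by `q`, with overall strict bound `U`. -/
theorem gs_wb_mul_headTerm_lt {h : FreeAssocAlg k X} {q a b : List X} (hh : WBnd h q)
    (hlt : LSLt (q ++ (a ++ (v ++ b))) U) (hlen : (q ++ (a ++ (v ++ b))).length = U.length) :
    GoodSum tv v U (h * (monom k a * evalC tv * monom k b)) := by
  revert hh
  induction h using MonoidAlgebra.induction with
  | zero => intro _; rw [zero_mul]; exact gs_zero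
  | single_add m c f hm hc ih =>
    intro hh
    obtain ⟨⟨hlm, hle⟩, hf⟩ := wbnd_single_add hm hc hh
    rw [add_mul]
    refine gs_add ?_ (ih hf)
    rw [single_eq_smul_monom, smul_mul_assoc]
    refine gs_smul c ?_
    have hre : monom k (FreeMonoid.toList m) * (monom k a * evalC tv * monom k b) =
        monom k (FreeMonoid.toList m ++ a) * evalC tv * monom k b := by
      rw [← mul_assoc, ← mul_assoc, monom_mul]
    rw [hre]
    have hwl : ((FreeMonoid.toList m ++ a) ++ v ++ b).length = U.length := by
      simp only [List.length_append] at *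
      omega
    have hwlt : LSLt ((FreeMonoid.toList m ++ a) ++ v ++ b) U := by
      rcases hle with rfl | hle'
      · simpa [List.append_assoc] using hlt
      · refine lslt_trans ?_ hlt
        have := lslt_append_any hlm hle' (a ++ (v ++ b)) (a ++ (v ++ b))
        simpa [List.append_assoc] using this
    have hgs := gs_single (tv := tv) (v := v) (U := U) (1 : k) (FreeMonoid.toList m ++ a) b
      hwl hwlt
    rwa [one_smul] at hgs

/-- `h[tv]b` with `h` strictly bounded by `p` is a good sum below `p ++ Z`. -/
theorem gs_sb_mul_headTerm {h : FreeAssocAlg k X} {p b Z : List X} (hh : SBnd h p)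
    (hlen : (v ++ b).length = Z.length) :
    GoodSum tv v (p ++ Z) ((h * evalC tv) * monom k b) := by
  revert hh
  induction h using MonoidAlgebra.induction with
  | zero => intro _; rw [zero_mul, zero_mul]; exact gs_zero
  | single_add m c f hm hc ih =>
    intro hh
    obtain ⟨⟨hlm, hlt⟩, hf⟩ := sbnd_single_add hm hc hh
    rw [add_mul, add_mul]
    refine gs_add ?_ (ih hf)
    rw [single_eq_smul_monom, smul_mul_assoc, smul_mul_assoc]
    refine gs_smul c ?_
    have hwl : (FreeMonoid.toList m ++ v ++ b).length = (p ++ Z).length := by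
      simp only [List.length_append] at *
      omega
    have hwlt : LSLt (FreeMonoid.toList m ++ v ++ b) (p ++ Z) := by
      have := lslt_append_any hlm hlt (v ++ b) Z
      simpa [List.append_assoc] using this
    have hgs := gs_single (tv := tv) (v := v) (U := p ++ Z) (1 : k) (FreeMonoid.toList m) b
      hwl hwlt
    rwa [one_smul] at hgs

/-- A good sum is strictly bounded, provided `[tv]` is weakly bounded by `v`. -/
theorem gs_sbnd {g : FreeAssocAlg k X} (hwv : WBnd (evalC (k := k) tv) v)
    (h : GoodSum tv v U g) : SBnd g U := by
  obtain ⟨l, rfl, hb⟩ := h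
  induction l with
  | nil => simpa using sb_zero (k := k) (X := X) U
  | cons p l ih =>
    simp only [List.map_cons, List.sum_cons]
    refine sb_add ?_ (ih fun q hq => hb q (by simp [hq]))
    obtain ⟨hl1, hl2⟩ := hb p (by simp)
    have hwb : WBnd (monom k p.2.1 * evalC tv * monom k p.2.2) (p.2.1 ++ v ++ p.2.2) :=
      wb_mul (wb_mul (wb_monom _) hwv) (wb_monom _)
    show SBnd (p.1 • (monom k p.2.1 * evalC tv * monom k p.2.2)) U
    exact sb_smul _ (sb_of_wb_lt hwb hl2 hl1)

end GoodSumLemmas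
section BaseCase

variable {k X : Type*} [Field k] [LinearOrder X]

theorem base_gen {tv : FreeMagma X} {v : List X} :
    ∀ (tcs' : List (FreeMagma X)) (cs' : List (List X)),
      List.Forall₂ IsStdBracketing cs' tcs' →
    ∀ (c₀ : List X) (t₀ : FreeMagma X) (R₀ : FreeAssocAlg k X),
      evalC t₀ = evalC tv * monom k c₀ + R₀ →
      GoodSum tv v (v ++ c₀) R₀ →
      (∀ (l₁ l₂ : List (List X)) (x : List X), cs' = l₁ ++ x :: l₂ →
        LSLt (x ++ (v ++ c₀ ++ l₁.flatten)) (v ++ c₀ ++ l₁.flatten ++ x)) →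
      ∃ R, evalC (leftComb t₀ tcs') = evalC tv * monom k (c₀ ++ cs'.flatten) + R ∧
        GoodSum tv v (v ++ (c₀ ++ cs'.flatten)) R := by
  intro tcs' cs' hf
  induction hf with
  | nil =>
    intro c₀ t₀ R₀ hEq hG _
    refine ⟨R₀, ?_, ?_⟩
    · show evalC t₀ = evalC tv * monom k (c₀ ++ []) + R₀
      simpa using hEq
    · simpa using hG
  | cons hxy hrest ih =>
    rename_i x tx cs'' tcs''
    intro c₀ t₀ R₀ hEq hG hineq
    have hxne : x ≠ [] := (std_alsw hxy).1
    -- data about `tx`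
    have wbEx : WBnd (evalC (k := k) tx) x := wb_evalC hxy
    have sbrx : SBnd (evalC (k := k) tx - monom k x) x := std_decomp hxy
    -- the key inequality for the head factor
    have hkey : LSLt (x ++ (v ++ c₀)) (v ++ c₀ ++ x) := by
      have := hineq [] (cs'') x rfl
      simpa using this
    have hkeylen : (x ++ (v ++ c₀)).length = (v ++ c₀ ++ x).length := by
      simp only [List.length_append]; omega
    -- new remainder
    set Ex : FreeAssocAlg k X := evalC tx with hEx
    set T : FreeAssocAlg k X := evalC tv with hT
    set R' : FreeAssocAlg k X :=
      T * (monom k c₀ * (Ex - monom k x)) + R₀ * Ex - (Ex * (T * monom k c₀) + Ex * R₀)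
      with hR'
    have hstep : evalC (t₀ * tx) = T * monom k (c₀ ++ x) + R' := by
      rw [evalC_mul, hEq, ← monom_mul, hR']
      noncomm_ring
    -- good sum pieces
    have g1 : GoodSum tv v (v ++ c₀ ++ x) (T * (monom k c₀ * (Ex - monom k x))) := by
      have hsb : SBnd (monom k c₀ * (Ex - monom k x)) (c₀ ++ x) :=
        sb_mul_right (wb_monom c₀) sbrx
      have := gs_headTerm_mul_sb (tv := tv) (v := v) (a := []) hsb
      rw [monom_nil, one_mul] at this
      have hEqU : [] ++ (v ++ (c₀ ++ x)) = v ++ c₀ ++ x := by simp [List.append_assoc]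
      rwa [hEqU] at this
    have g2 : GoodSum tv v (v ++ c₀ ++ x) (R₀ * Ex) := by
      have := gs_mul_wb hG wbEx
      rwa [show v ++ c₀ ++ x = v ++ c₀ ++ x from rfl] at this
    have g3 : GoodSum tv v (v ++ c₀ ++ x) (Ex * (T * monom k c₀)) := by
      have := gs_wb_mul_headTerm_lt (tv := tv) (v := v) (a := []) (b := c₀) wbEx
        (U := v ++ c₀ ++ x) (by simpa [List.append_assoc] using hkey)
        (by simp only [List.length_append, List.length_nil]; omega)
      rw [monom_nil, one_mul] at this
      exact this
    have g4 : GoodSum tv v (v ++ c₀ ++ x) (Ex * R₀) := by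
      have := gs_wb_mul hG wbEx
      refine gs_bound_mono this ?_ ?_
      · simp only [List.length_append]; omega
      · simpa [List.append_assoc] using hkey
    have gR' : GoodSum tv v (v ++ (c₀ ++ x)) R' := by
      have := gs_sub (gs_add g1 g2) (gs_add g3 g4)
      rwa [show v ++ c₀ ++ x = v ++ (c₀ ++ x) by simp [List.append_assoc]] at this
    -- apply the induction hypothesis
    have hineq' : ∀ (l₁ l₂ : List (List X)) (y : List X), cs'' = l₁ ++ y :: l₂ →
        LSLt (y ++ (v ++ (c₀ ++ x) ++ l₁.flatten)) (v ++ (c₀ ++ x) ++ l₁.flatten ++ y) := by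
      intro l₁ l₂ y hsplit
      have := hineq (x :: l₁) l₂ y (by rw [hsplit]; rfl)
      simpa [List.flatten_cons, List.append_assoc] using this
    obtain ⟨R, hReq, hRG⟩ := ih (c₀ ++ x) (t₀ * tx) R' hstep gR' hineq'
    refine ⟨R, ?_, ?_⟩
    · show evalC (leftComb (t₀ * tx) tcs'') = _ + R
      rw [hReq]
      congr 2
      simp [List.flatten_cons, List.append_assoc]
    · have hb : v ++ (c₀ ++ x ++ cs''.flatten) = v ++ (c₀ ++ (x :: cs'').flatten) := by
        simp [List.flatten_cons, List.append_assoc]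
      rwa [hb] at hRG

end BaseCase
section MainInduction

variable {k X : Type*} [Field k] [LinearOrder X]

theorem base_decomp {tv : FreeMagma X} {v c : List X} {cs : List (List X)}
    {tcs : List (FreeMagma X)} (hvne : v ≠ []) (hvc : IsALSW (v ++ c)) (hc : c = cs.flatten)
    (hall : ∀ w ∈ cs, IsALSW w) (hch : List.Chain' LSLe cs)
    (htcs : List.Forall₂ IsStdBracketing cs tcs) :
    ∃ R, evalC (leftComb tv tcs) = evalC (k := k) tv * monom k c + R ∧
      GoodSum tv v (v ++ c) R := by
  have hmain := base_gen (k := k) (tv := tv) (v := v) tcs cs htcs [] tv 0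
    (by rw [monom_nil, mul_one, add_zero]) (by simpa using gs_zero) ?_
  · obtain ⟨R, h1, h2⟩ := hmain
    subst hc
    exact ⟨R, by simpa using h1, by simpa using h2⟩
  · intro l₁ l₂ x hsplit
    have hk := key_ineq (v := v) (cs := cs) (by rwa [← hc]) hvne hall hch hsplit
    simpa [List.append_assoc] using hk

theorem main_decomp {tv s : FreeMagma X} {v c : List X} {tcs : List (FreeMagma X)}
    (hwv : WBnd (evalC (k := k) tv) v) (hws : wordOf s = v ++ c)
    (hbase : ∃ R₀, evalC (leftComb tv tcs) = evalC (k := k) tv * monom k c + R₀ ∧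
      GoodSum tv v (v ++ c) R₀) :
    ∀ {a d : List X} {t t' : FreeMagma X}, ReplaceAt s (leftComb tv tcs) a d t t' →
      IsStdBracketing (wordOf t) t →
      ∃ R, evalC (k := k) t' = monom k a * evalC tv * monom k (c ++ d) + R ∧
        GoodSum tv v (a ++ v ++ (c ++ d)) R := by
  intro a d t t' hrep
  induction hrep with
  | refl =>
    intro _
    obtain ⟨R₀, h1, h2⟩ := hbase
    refine ⟨R₀, ?_, ?_⟩
    · rw [List.append_nil, monom_nil, one_mul]
      exact h1
    · simpa using h2
  | left t₂ hr ih =>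
    rename_i a d t₁ t₁'
    intro hstd
    obtain ⟨h1std, h2std, -⟩ := std_mul_inv hstd
    obtain ⟨R₁, hEq₁, hG₁⟩ := ih h1std
    have hU₁ : wordOf t₁ = a ++ v ++ (c ++ d) := by
      rw [(replace_word hr).1, hws]
      simp [List.append_assoc]
    have hswap : LSLt (wordOf t₂ ++ wordOf t₁) (wordOf t₁ ++ wordOf t₂) := by
      have halsw : IsALSW (wordOf t₁ ++ wordOf t₂) := by
        have := std_alsw hstd
        rwa [wordOf_mul] at this
      exact alsw_swap halsw (wordOf_ne_nil t₁) (wordOf_ne_nil t₂)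
    have wbE₂ : WBnd (evalC (k := k) t₂) (wordOf t₂) := wb_evalC h2std
    have sbr₂ : SBnd (evalC (k := k) t₂ - monom k (wordOf t₂)) (wordOf t₂) := std_decomp h2std
    refine ⟨monom k a * evalC tv * (monom k (c ++ d) * (evalC t₂ - monom k (wordOf t₂))) +
      R₁ * evalC t₂ - evalC t₂ * evalC t₁', ?_, ?_⟩
    · rw [evalC_mul,
        show monom k (c ++ (d ++ wordOf t₂)) = monom k (c ++ d) * monom k (wordOf t₂) by
          rw [monom_mul, List.append_assoc],
        hEq₁]
      noncomm_ring
    · refine gs_sub (gs_add ?_ ?_) ?_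
      · have hsb : SBnd (monom k (c ++ d) * (evalC (k := k) t₂ - monom k (wordOf t₂)))
            ((c ++ d) ++ wordOf t₂) := sb_mul_right (wb_monom _) sbr₂
        have hgs := gs_headTerm_mul_sb (tv := tv) (v := v) (a := a) hsb
        rwa [show a ++ (v ++ ((c ++ d) ++ wordOf t₂)) = a ++ v ++ (c ++ (d ++ wordOf t₂)) by
          simp [List.append_assoc]] at hgs
      · have hgs := gs_mul_wb hG₁ wbE₂
        rwa [show (a ++ v ++ (c ++ d)) ++ wordOf t₂ = a ++ v ++ (c ++ (d ++ wordOf t₂)) by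
          simp [List.append_assoc]] at hgs
      · rw [hEq₁, mul_add]
        refine gs_add ?_ ?_
        · refine gs_wb_mul_headTerm_lt (tv := tv) (v := v) (a := a) (b := c ++ d) wbE₂ ?_ ?_
          · rw [show wordOf t₂ ++ (a ++ (v ++ (c ++ d))) = wordOf t₂ ++ wordOf t₁ by
              simp [hU₁, List.append_assoc],
              show a ++ v ++ (c ++ (d ++ wordOf t₂)) = wordOf t₁ ++ wordOf t₂ by
              simp [hU₁, List.append_assoc]]
            exact hswap
          · simp only [List.length_append]
            omega
        · have hgs := gs_wb_mul hG₁ wbE₂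
          refine gs_bound_mono hgs ?_ ?_
          · simp only [List.length_append]
            try omega
          · rw [show wordOf t₂ ++ (a ++ v ++ (c ++ d)) = wordOf t₂ ++ wordOf t₁ by
              simp [hU₁, List.append_assoc],
              show a ++ v ++ (c ++ (d ++ wordOf t₂)) = wordOf t₁ ++ wordOf t₂ by
              simp [hU₁, List.append_assoc]]
            exact hswap
  | right t₁ hr ih =>
    rename_i a d t₂ t₂'
    intro hstd
    obtain ⟨h1std, h2std, -⟩ := std_mul_inv hstd
    obtain ⟨R₂, hEq₂, hG₂⟩ := ih h2std
    have hU₂ : wordOf t₂ = a ++ v ++ (c ++ d) := by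
      rw [(replace_word hr).1, hws]
      simp [List.append_assoc]
    have hswap : LSLt (wordOf t₂ ++ wordOf t₁) (wordOf t₁ ++ wordOf t₂) := by
      have halsw : IsALSW (wordOf t₁ ++ wordOf t₂) := by
        have := std_alsw hstd
        rwa [wordOf_mul] at this
      exact alsw_swap halsw (wordOf_ne_nil t₁) (wordOf_ne_nil t₂)
    have wbE₁ : WBnd (evalC (k := k) t₁) (wordOf t₁) := wb_evalC h1std
    have sbr₁ : SBnd (evalC (k := k) t₁ - monom k (wordOf t₁)) (wordOf t₁) := std_decomp h1std
    refine ⟨monom k (wordOf t₁) * R₂ +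
      (evalC t₁ - monom k (wordOf t₁)) * evalC t₂' - evalC t₂' * evalC t₁, ?_, ?_⟩
    · rw [evalC_mul,
        show monom k (wordOf t₁ ++ a) = monom k (wordOf t₁) * monom k a from (monom_mul _ _).symm,
        hEq₂]
      noncomm_ring
    · refine gs_sub (gs_add ?_ ?_) ?_
      · have hgs := gs_monom_mul_le hG₂ (lsle_refl (u := wordOf t₁)) rfl
        rwa [show wordOf t₁ ++ (a ++ v ++ (c ++ d)) = wordOf t₁ ++ a ++ v ++ (c ++ d) by
          simp [List.append_assoc]] at hgs
      · rw [hEq₂, mul_add]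
        refine gs_add ?_ ?_
        · have hre : (evalC (k := k) t₁ - monom k (wordOf t₁)) *
              (monom k a * evalC tv * monom k (c ++ d)) =
              (((evalC t₁ - monom k (wordOf t₁)) * monom k a) * evalC tv) * monom k (c ++ d) := by
            rw [← mul_assoc, ← mul_assoc]
          rw [hre]
          have hsb : SBnd ((evalC (k := k) t₁ - monom k (wordOf t₁)) * monom k a)
              (wordOf t₁ ++ a) := sb_mul_left sbr₁ (wb_monom a)
          have hgs := gs_sb_mul_headTerm (tv := tv) (v := v) (b := c ++ d)
            (Z := v ++ (c ++ d)) hsb rfl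
          rwa [show (wordOf t₁ ++ a) ++ (v ++ (c ++ d)) = wordOf t₁ ++ a ++ v ++ (c ++ d) by
            simp [List.append_assoc]] at hgs
        · have hgs := gs_wb_mul hG₂ (sb_wb sbr₁)
          rwa [show wordOf t₁ ++ (a ++ v ++ (c ++ d)) = wordOf t₁ ++ a ++ v ++ (c ++ d) by
            simp [List.append_assoc]] at hgs
      · rw [hEq₂, add_mul]
        refine gs_add ?_ ?_
        · have hre : (monom k a * evalC (k := k) tv * monom k (c ++ d)) * evalC t₁ =
              (monom k a * evalC tv) * (monom k (c ++ d) * evalC t₁) := by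
            rw [mul_assoc]
          rw [hre]
          refine gs_headTerm_wb_lt (tv := tv) (v := v) (a := a)
            (wb_mul (wb_monom (c ++ d)) wbE₁) ?_ ?_
          · rw [show a ++ (v ++ ((c ++ d) ++ wordOf t₁)) = wordOf t₂ ++ wordOf t₁ by
              simp [hU₂, List.append_assoc],
              show wordOf t₁ ++ a ++ v ++ (c ++ d) = wordOf t₁ ++ wordOf t₂ by
              simp [hU₂, List.append_assoc]]
            exact hswap
          · simp only [List.length_append]
            omega
        · have hgs := gs_mul_wb hG₂ wbE₁
          refine gs_bound_mono hgs ?_ ?_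
          · simp only [List.length_append]
            try omega
          · rw [show (a ++ v ++ (c ++ d)) ++ wordOf t₁ = wordOf t₂ ++ wordOf t₁ by
              simp [hU₂, List.append_assoc],
              show wordOf t₁ ++ a ++ v ++ (c ++ d) = wordOf t₁ ++ wordOf t₂ by
              simp [hU₂, List.append_assoc]]
            exact hswap

end MainInduction
/-- Shirshov's special bracketing lemma, part (ii).
Let `u = avb` be an ALSW with ALSW subword `v`, and let `[u]_v` be the relative
bracketing obtained from `[u] = [a[vc]d]` by replacing `[vc]` with
`[[[v][c₁]]⋯[c_k]]`, where `c = c₁⋯c_k` is the non-decreasing Lyndon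
factorization of `c`.  Then in `k⟨X⟩` the leading word of `[u]_v` is `u`, and
`[u]_v = a[v]b + Σᵢ αᵢ aᵢ[v]bᵢ` with each `aᵢvbᵢ < avb` in deg-lex order. -/
theorem shirshov_special_bracketing_ii {k X : Type*} [Field k] [LinearOrder X]
    (a v b c d : List X) (t s tv t' : FreeMagma X)
    (cs : List (List X)) (tcs : List (FreeMagma X))
    (hu : IsALSW (a ++ v ++ b)) (hv : IsALSW v) (hb : b = c ++ d)
    (ht : IsStdBracketing (a ++ v ++ b) t)
    (hs : SubtreeAt s a d t) (hws : wordOf s = v ++ c)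
    (htv : IsStdBracketing v tv) (hcs : LyndonFactorization c cs)
    (htcs : List.Forall₂ IsStdBracketing cs tcs)
    (hrep : ReplaceAt s (leftComb tv tcs) a d t t') :
    IsLeadingWord (evalC (k := k) t') (a ++ v ++ b) ∧
      ∃ (n : ℕ) (α : Fin n → k) (aa bb : Fin n → List X),
        evalC (k := k) t' =
            monom k a * evalC tv * monom k b +
              ∑ i, α i • (monom k (aa i) * evalC (k := k) tv * monom k (bb i)) ∧
          ∀ i, DegLt (aa i ++ v ++ bb i) (a ++ v ++ b) := by

  obtain ⟨hcj, hall, hch⟩ := hcs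
  have hvne : v ≠ [] := hv.1
  have htstd : IsStdBracketing (wordOf t) t := by rwa [std_word ht]
  have hsstd : IsStdBracketing (wordOf s) s := subtree_std hs htstd
  have hvc : IsALSW (v ++ c) := by rw [← hws]; exact std_alsw hsstd
  have hwv : WBnd (evalC (k := k) tv) v := wb_evalC htv
  have hbase := base_decomp (k := k) (tv := tv) hvne hvc hcj hall hch htcs
  obtain ⟨R, hEq, hG⟩ := main_decomp hwv hws hbase hrep htstd
  subst hb
  constructor
  · -- the leading word of `[u]_v` is `u`
    have sbrv : SBnd (evalC (k := k) tv - monom k v) v := std_decomp htv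
    have sbTail : SBnd ((monom k a * (evalC tv - monom k v)) * monom k (c ++ d) + R)
        (a ++ v ++ (c ++ d)) :=
      sb_add (sb_mul_left (sb_mul_right (wb_monom a) sbrv) (wb_monom (c ++ d))) (gs_sbnd hwv hG)
    have hexp : evalC (k := k) t' = monom k (a ++ v ++ (c ++ d)) +
        ((monom k a * (evalC tv - monom k v)) * monom k (c ++ d) + R) := by
      have hm : monom k (a ++ v ++ (c ++ d)) = monom k a * monom k v * monom k (c ++ d) := by
        rw [monom_mul, monom_mul]
      rw [hEq, hm]
      noncomm_ring
    constructor
    · rw [hexp, coeffW_add, coeffW_monom_self, sbnd_coeff_self sbTail, add_zero]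
      exact one_ne_zero
    · intro w hw
      by_cases hwe : w = a ++ v ++ (c ++ d)
      · exact Or.inl hwe
      · right
        rw [hexp, coeffW_add, coeffW_monom, if_neg hwe, zero_add] at hw
        obtain ⟨hlen, hlt⟩ := sbTail w hw
        exact Or.inr ⟨hlen, hlt⟩
  · -- the structured sum
    obtain ⟨l, rfl, hbnd⟩ := hG
    refine ⟨l.length, fun i => (l.get i).1, fun i => (l.get i).2.1, fun i => (l.get i).2.2,
      ?_, ?_⟩
    · rw [hEq]
      congr 1
      calc (l.map (gsEntry tv)).sum
          = ((List.ofFn l.get).map (gsEntry tv)).sum := by rw [List.ofFn_get]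
        _ = (List.ofFn (gsEntry tv ∘ l.get)).sum := by rw [List.map_ofFn]
        _ = ∑ i, gsEntry tv (l.get i) := List.sum_ofFn
    · intro i
      obtain ⟨hlen, hlt⟩ := hbnd (l.get i) (l.get_mem i)
      exact Or.inr ⟨hlen, hlt⟩
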